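/- Let A := ℚ[ε] be the ring of dual numbers over ℚ (so ε² = 0). In A[[X]], let exp X := ∑_{k≥0} X^k/k!, cosh X := (exp X + exp(−X))/2, sinh X := (exp X − exp(−X))/2, and set f := 1 + ε·(exp X − 1) and g := X + 2ε·X·(cosh X − 1). Then f(−g(X))² = g′(X) · (1 − 2ε·(1 + X)·sinh X), where f(−g(X)) denotes the substitution of the power series −g(X) (which has zero constant term) into f, and g′ is the formal derivative of g. -/

import Mathlib

/-- Formal composition `f(g(X))` of power series; it agrees with the usual substitution
whenever `g` has zero constant coefficient. -/
noncomputable def PowerSeries.comp' {A : Type*} [CommRing A] (f g : PowerSeries A) :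
    PowerSeries A :=
  PowerSeries.mk fun n => ∑ k ∈ Finset.range (n + 1),
    PowerSeries.coeff (R := A) k f * PowerSeries.coeff (R := A) n (g ^ k)


namespace Stmt8Aux

open PowerSeries

variable {A : Type*} [CommRing A]

lemma comp'_add (f₁ f₂ p : PowerSeries A) :
    PowerSeries.comp' (f₁ + f₂) p = PowerSeries.comp' f₁ p + PowerSeries.comp' f₂ p := by
  ext n
  simp [PowerSeries.comp', add_mul, Finset.sum_add_distrib]

lemma comp'_C_mul (a : A) (f p : PowerSeries A) :
    PowerSeries.comp' (C (R := A) a * f) p = C (R := A) a * PowerSeries.comp' f p := by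
  ext n
  simp [PowerSeries.comp', coeff_C_mul, Finset.mul_sum, mul_assoc]

lemma comp'_one (p : PowerSeries A) : PowerSeries.comp' 1 p = 1 := by
  ext n
  rw [PowerSeries.comp', coeff_mk, Finset.sum_eq_single 0]
  · simp
  · intro k _ hk0; simp [coeff_one, hk0]
  · intro h; exact absurd (Finset.mem_range.2 (Nat.succ_pos n)) h

lemma comp'_neg_X (h : PowerSeries A) :
    PowerSeries.comp' h (-X) = rescale (-1) h := by
  ext n
  have key : ∀ k : ℕ, coeff (R := A) n ((-X : PowerSeries A) ^ k)
      = (-1 : A) ^ k * coeff (R := A) n (X ^ k) := by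
    intro k
    have : ((-X : PowerSeries A) ^ k) = C (R := A) ((-1 : A) ^ k) * X ^ k := by
      rw [map_pow, map_neg, map_one, ← neg_one_mul, mul_pow]
    rw [this, coeff_C_mul]
  rw [PowerSeries.comp', coeff_mk, coeff_rescale, Finset.sum_eq_single n]
  · rw [key, coeff_X_pow, if_pos rfl]; ring
  · intro k _ hk; rw [key, coeff_X_pow, if_neg (fun hh => hk hh.symm)]; ring
  · intro h; exact absurd (Finset.mem_range.2 (Nat.lt_succ_self n)) h

lemma sq_pow (a : A) (ha : a * a = 0) (x h : PowerSeries A) (k : ℕ) :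
    C (R := A) a * (x + C (R := A) a * h) ^ k = C (R := A) a * x ^ k := by
  have hc : C (R := A) a * C (R := A) a = 0 := by rw [← map_mul, ha, map_zero]
  induction k with
  | zero => simp
  | succ k ih =>
      rw [pow_succ, pow_succ]
      linear_combination (x + C (R := A) a * h) * ih + (x ^ k * h) * hc

lemma comp'_sq_zero (a : A) (ha : a * a = 0) (F y w : PowerSeries A) :
    C (R := A) a * PowerSeries.comp' F (y + C (R := A) a * w) = C (R := A) a * PowerSeries.comp' F y := by
  ext n
  rw [coeff_C_mul, coeff_C_mul, PowerSeries.comp', PowerSeries.comp', coeff_mk, coeff_mk,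
    Finset.mul_sum, Finset.mul_sum]
  refine Finset.sum_congr rfl fun k _ => ?_
  have h1 : C (R := A) a * (y + C (R := A) a * w) ^ k = C (R := A) a * y ^ k := sq_pow a ha y w k
  calc a * (coeff (R := A) k F * coeff (R := A) n ((y + C (R := A) a * w) ^ k))
      = coeff (R := A) k F * coeff (R := A) n (C (R := A) a * (y + C (R := A) a * w) ^ k) := by
        rw [coeff_C_mul]; ring
    _ = coeff (R := A) k F * coeff (R := A) n (C (R := A) a * y ^ k) := by rw [h1]
    _ = a * (coeff (R := A) k F * coeff (R := A) n (y ^ k)) := by rw [coeff_C_mul]; ring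

end Stmt8Aux

section Main

open PowerSeries Stmt8Aux

abbrev Adn := DualNumber ℚ

lemma coeff_derivativeFun' {R : Type*} [CommSemiring R] (f : PowerSeries R) (n : ℕ) :
    coeff n (derivativeFun f) = coeff (n + 1) f * (n + 1) := coeff_derivative f n

lemma derivativeFun_C' {R : Type*} [CommSemiring R] (r : R) :
    derivativeFun (C r) = 0 := derivative_C

lemma qsmul_eq' (q : ℚ) (p : PowerSeries Adn) :
    q • p = C (R := Adn) (algebraMap ℚ Adn q) * p := by
  refine PowerSeries.ext fun n => ?_
  rw [coeff_C_mul]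
  have h : coeff (R := Adn) n (q • p) = q • coeff (R := Adn) n p := rfl
  rw [h, Algebra.smul_def]

lemma derivFun_sub (F G : PowerSeries Adn) :
    derivativeFun (F - G) = derivativeFun F - derivativeFun G := by
  refine PowerSeries.ext fun n => ?_
  rw [coeff_derivativeFun', map_sub, map_sub, coeff_derivativeFun', coeff_derivativeFun']
  ring

lemma derivFun_X : derivativeFun (X : PowerSeries Adn) = 1 := by
  refine PowerSeries.ext fun n => ?_
  rw [coeff_derivativeFun']
  cases n with
  | zero => simp
  | succ m => simp [coeff_X]

lemma deriv_exp' : derivativeFun (exp Adn) = exp Adn := by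
  refine PowerSeries.ext fun n => ?_
  rw [coeff_derivativeFun', coeff_exp, coeff_exp]
  have : ((n : Adn) + 1) = algebraMap ℚ Adn ((n : ℚ) + 1) := by push_cast; ring
  rw [this, ← map_mul]
  congr 1
  have hn : ((n : ℚ) + 1) ≠ 0 := by positivity
  rw [Nat.factorial_succ]
  field_simp
  push_cast
  ring

lemma deriv_rescale_neg (F : PowerSeries Adn) :
    derivativeFun (rescale (-1) F) = - rescale (-1) (derivativeFun F) := by
  refine PowerSeries.ext fun n => ?_
  rw [coeff_derivativeFun', coeff_rescale, map_neg, coeff_rescale, coeff_derivativeFun',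
    pow_succ]
  ring

set_option maxHeartbeats 1000000 in
/-- over the dual numbers `A = ℚ[ε]`, with `f = 1 + ε(exp X − 1)` and
`g = X + 2εX(cosh X − 1)`, one has `f(−g(X))² = g′(X)·(1 − 2ε(1 + X) sinh X)`.
Here `exp X = ∑ X^k/k!`, `cosh X = (exp X + exp(−X))/2` and
`sinh X = (exp X − exp(−X))/2`. -/
theorem statement8 :
    let A := DualNumber ℚ
    let E : PowerSeries A := PowerSeries.exp A
    let cosh : PowerSeries A := (1 / 2 : ℚ) • (E + PowerSeries.rescale (-1) E)
    let sinh : PowerSeries A := (1 / 2 : ℚ) • (E - PowerSeries.rescale (-1) E)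
    let f : PowerSeries A := 1 + PowerSeries.C (R := A) DualNumber.eps * (E - 1)
    let g : PowerSeries A :=
      PowerSeries.X + 2 * PowerSeries.C (R := A) DualNumber.eps * PowerSeries.X * (cosh - 1)
    PowerSeries.comp' f (-g) ^ 2
      = PowerSeries.derivativeFun g *
          (1 - 2 * PowerSeries.C (R := A) DualNumber.eps * (1 + PowerSeries.X) * sinh) := by
  intro A E cosh sinh f g
  set c : PowerSeries A := C (R := A) DualNumber.eps with hc_def
  have heps : (DualNumber.eps : A) * DualNumber.eps = 0 := DualNumber.eps_mul_eps
  have hc : c * c = 0 := by rw [hc_def, ← map_mul, heps, map_zero]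
  set R : PowerSeries A := rescale (-1) E with hR_def
  set half : PowerSeries A := C (R := A) (algebraMap ℚ A (1/2)) with hhalf_def
  have hhalf2 : half * 2 = 1 := by
    have h2 : (2 : PowerSeries A) = C (R := A) (algebraMap ℚ A 2) := by
      rw [map_ofNat, map_ofNat]
    rw [hhalf_def, h2, ← map_mul, ← map_mul]
    norm_num
  have hcosh : cosh = half * (E + R) := qsmul_eq' _ _
  have hsinh : sinh = half * (E - R) := qsmul_eq' _ _
  -- compute the composition
  have hg : -g = -X + c * (-(2 * X * (cosh - 1))) := by
    show -(X + 2 * c * X * (cosh - 1)) = _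
    ring
  have hcomp : PowerSeries.comp' f (-g) = 1 + c * (R - 1) := by
    have hf : f = 1 + c * (E - 1) := rfl
    rw [hf, comp'_add, comp'_one, comp'_C_mul, hg, comp'_sq_zero _ heps, comp'_neg_X,
      map_sub, map_one]
  -- compute the derivative of g
  have hdE : derivativeFun E = E := deriv_exp'
  have hdR : derivativeFun R = -R := by rw [hR_def, deriv_rescale_neg, hdE]
  have hdcosh : derivativeFun cosh = sinh := by
    rw [hcosh, hsinh, hhalf_def, ← smul_eq_C_mul, ← smul_eq_C_mul, derivativeFun_smul,
      derivativeFun_add, hdE, hdR]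
    congr 1
    ring
  have hdg : derivativeFun g = 1 + c * (2 * X * sinh + (cosh - 1) * 2) := by
    have hgx : g = X + c * (2 * X * (cosh - 1)) := by
      show X + 2 * c * X * (cosh - 1) = _; ring
    have h2d : derivativeFun (2 : PowerSeries A) = 0 := by
      rw [show (2 : PowerSeries A) = C (R := A) 2 from (map_ofNat (C (R := A)) 2).symm, derivativeFun_C']
    have hdh : derivativeFun (2 * X * (cosh - 1)) = 2 * X * sinh + (cosh - 1) * 2 := by
      rw [derivativeFun_mul, smul_eq_mul, smul_eq_mul, derivFun_sub, hdcosh, derivativeFun_one,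
        derivativeFun_mul, smul_eq_mul, smul_eq_mul, derivFun_X, h2d]
      ring
    have hdc : derivativeFun (c * (2 * X * (cosh - 1)))
        = c * (2 * X * sinh + (cosh - 1) * 2) := by
      rw [derivativeFun_mul, smul_eq_mul, smul_eq_mul, hdh, hc_def, derivativeFun_C']
      ring
    rw [hgx, derivativeFun_add, derivFun_X, hdc]
  -- cosh - sinh = R
  have hcs : cosh - sinh = R := by
    rw [hcosh, hsinh]
    linear_combination R * hhalf2
  rw [hcomp, hdg, hsinh, hcosh]
  linear_combination (-(2 * R * c)) * hhalf2 +
    ((2 * X * half * (E - R) + 2 * half * (E + R) - 2) * (2 * (1 + X) * half * (E - R))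
      + (R - 1) ^ 2) * hc
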